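/- Let a, b be real numbers with b - a ≥ 4, and let f : ℝ → ℝ be continuous on [a, b]. If f is uniformly approximable on [a, b] by polynomials with integer coefficients (i.e., for every ε > 0 there exists a polynomial p with integer coefficients such that |f(x) - p(x)| ≤ ε for all x ∈ [a, b]), then f coincides on [a, b] with a polynomial with integer coefficients: there exists a polynomial p ∈ ℤ[X] such that f(x) = p(x) for all x ∈ [a, b]. -/

import Mathlib

open Polynomial Real Set

/-- Monic rescaled Chebyshev polynomials: `Ch n` evaluated at `2 cos θ` gives `2 cos (n θ)`. -/
noncomputable def Ch : ℕ → ℝ[X]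
  | 0 => Polynomial.C 2
  | 1 => Polynomial.X
  | n + 2 => Polynomial.X * Ch (n + 1) - Ch n

lemma Ch_eval_cos (n : ℕ) (θ : ℝ) : (Ch n).eval (2 * Real.cos θ) = 2 * Real.cos (n * θ) := by
  induction n using Nat.strong_induction_on with
  | _ n ih =>
    match n with
    | 0 => simp [Ch]
    | 1 => simp [Ch]
    | n + 2 =>
      have h1 := ih (n + 1) (by omega)
      have h0 := ih n (by omega)
      simp only [Ch, eval_sub, eval_mul, eval_X, h1, h0]
      push_cast
      rw [show ((n : ℝ) + 2) * θ = ((n + 1) * θ) + θ by ring,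
        show (n : ℝ) * θ = ((n + 1) * θ) - θ by ring, Real.cos_add, Real.cos_sub]
      ring

lemma Ch_degree_le (n : ℕ) : (Ch n).degree ≤ n := by
  induction n using Nat.strong_induction_on with
  | _ n ih =>
    match n with
    | 0 =>
      exact degree_C_le
    | 1 => exact degree_X_le
    | n + 2 =>
      have h1 := ih (n + 1) (by omega)
      have h0 := ih n (by omega)
      show (Polynomial.X * Ch (n + 1) - Ch n).degree ≤ ((n + 2 : ℕ) : WithBot ℕ)
      refine le_trans (degree_sub_le _ _) (max_le ?_ (h0.trans ?_))
      · calc (Polynomial.X * Ch (n+1)).degree ≤ 1 + (Ch (n+1)).degree :=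
            by simpa using degree_mul_le Polynomial.X (Ch (n+1))
          _ ≤ 1 + ((n + 1 : ℕ) : WithBot ℕ) := by exact add_le_add le_rfl h1
          _ = ((n + 2 : ℕ) : WithBot ℕ) := by push_cast; ring
      · exact_mod_cast (by omega : n ≤ n + 2)

lemma Ch_monic (n : ℕ) (hn : 1 ≤ n) : (Ch n).Monic ∧ (Ch n).degree = n := by
  induction n using Nat.strong_induction_on with
  | _ n ih =>
    match n with
    | 1 => exact ⟨monic_X, degree_X⟩
    | n + 2 =>
      obtain ⟨hm, hd⟩ := ih (n + 1) (by omega) (by omega)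
      have hmX : (Polynomial.X * Ch (n + 1)).Monic := monic_X.mul hm
      have hdX : (Polynomial.X * Ch (n + 1)).degree = ((n + 2 : ℕ) : WithBot ℕ) := by
        rw [degree_mul, degree_X, hd]
        push_cast; ring
      have hlt : (Ch n).degree < (Polynomial.X * Ch (n + 1)).degree := by
        rw [hdX]
        exact lt_of_le_of_lt (Ch_degree_le n) (by exact_mod_cast Nat.lt_add_of_pos_right (by norm_num))
      constructor
      · exact hmX.sub_of_left hlt
      · show (Polynomial.X * Ch (n + 1) - Ch n).degree = ((n + 2 : ℕ) : WithBot ℕ)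
        rw [degree_sub_eq_left_of_degree_lt hlt, hdX]

/-- A monic real polynomial of degree ≥ 1 cannot be everywhere `< 2` in absolute
value on an interval of length 4. -/
lemma monic_sup_ge (q : ℝ[X]) (hq : q.Monic) (hn : 1 ≤ q.natDegree) (c : ℝ)
    (h : ∀ x ∈ Set.Icc c (c + 4), |q.eval x| < 2) : False := by
  set n := q.natDegree with hn_def
  set m := c + 2 with hm_def
  obtain ⟨hChm, hChd⟩ := Ch_monic n hn
  set P : ℝ[X] := (Ch n).comp (Polynomial.X - Polynomial.C m) with hP_def
  have hPm : P.Monic := hChm.comp_X_sub_C m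
  have hPdeg : P.natDegree = n := by
    rw [hP_def, natDegree_comp, natDegree_X_sub_C, mul_one,
      natDegree_eq_of_degree_eq_some hChd]
  have hnR : (0:ℝ) < n := by exact_mod_cast hn
  set x : ℕ → ℝ := fun k => m + 2 * Real.cos (k * π / n) with hx_def
  have hmemθ : ∀ k : ℕ, k ≤ n → (k : ℝ) * π / n ∈ Set.Icc 0 π := by
    intro k hk
    constructor
    · positivity
    · rw [div_le_iff₀ hnR]
      have : (k : ℝ) ≤ n := by exact_mod_cast hk
      nlinarith [Real.pi_pos]
  have hxmem : ∀ k : ℕ, x k ∈ Set.Icc c (c + 4) := by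
    intro k
    have h1 := Real.neg_one_le_cos ((k : ℝ) * π / n)
    have h2 := Real.cos_le_one ((k : ℝ) * π / n)
    constructor <;> simp only [hx_def, hm_def] <;> nlinarith
  have hPx : ∀ k : ℕ, P.eval (x k) = 2 * (-1 : ℝ) ^ k := by
    intro k
    have h1 : P.eval (x k) = (Ch n).eval (2 * Real.cos ((k : ℝ) * π / n)) := by
      simp [hP_def, hx_def, eval_comp]
    rw [h1, Ch_eval_cos]
    have hcan : (n : ℝ) * ((k : ℝ) * π / n) = (k : ℝ) * π := by
      field_simp
    rw [hcan]
    have h2 := Real.cos_nat_mul_pi_sub 0 k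
    simp only [sub_zero, Real.cos_zero, mul_one] at h2
    rw [h2]
  have hxanti : ∀ i j : ℕ, i < j → j ≤ n → x j < x i := by
    intro i j hij hjn
    have hθi : (0:ℝ) ≤ (i : ℝ) * π / n := (hmemθ i (by omega)).1
    have hθj : (j : ℝ) * π / n ≤ π := (hmemθ j hjn).2
    have hij' : (i : ℝ) * π / n < (j : ℝ) * π / n := by
      have : (i:ℝ) < (j:ℝ) := by exact_mod_cast hij
      have hπ := Real.pi_pos
      gcongr
    have := Real.cos_lt_cos_of_nonneg_of_le_pi hθi hθj hij'
    simp only [hx_def]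
    linarith
  set d := P - q with hd_def
  have hdev : ∀ k, d.eval (x k) = 2 * (-1:ℝ)^k - q.eval (x k) := by
    intro k
    simp [hd_def, hPx k]
  have hqdeg : q.degree = (n : WithBot ℕ) := degree_eq_natDegree hq.ne_zero
  have hPdeg' : P.degree = (n : WithBot ℕ) := by
    rw [degree_eq_natDegree hPm.ne_zero, hPdeg]
  have hdlt : d.degree < (n : WithBot ℕ) := by
    rw [hd_def, ← hPdeg']
    exact degree_sub_lt (hPdeg'.trans hqdeg.symm) hPm.ne_zero
      (hPm.leadingCoeff.trans hq.leadingCoeff.symm)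
  have hsign : ∀ k : ℕ, 0 < (-1:ℝ)^k * d.eval (x k) := by
    intro k
    have hsq : ((-1:ℝ)^k)^2 = 1 := by
      rw [← pow_mul, mul_comm, pow_mul, neg_one_sq, one_pow]
    have hb : (-1:ℝ)^k * q.eval (x k) < 2 := by
      have habs : |(-1:ℝ)^k * q.eval (x k)| < 2 := by
        rw [abs_mul, abs_pow, abs_neg, abs_one, one_pow, one_mul]
        exact h _ (hxmem k)
      exact lt_of_le_of_lt (le_abs_self _) habs
    rw [hdev k]
    nlinarith
  have hroot : ∀ k : ℕ, k < n → ∃ y ∈ Set.Ioo (x (k+1)) (x k), d.eval y = 0 := by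
    intro k hk
    have hxy : x (k+1) < x k := hxanti k (k+1) (by omega) (by omega)
    have hcont : ContinuousOn (fun y => d.eval y) (Set.Icc (x (k+1)) (x k)) :=
      (Polynomial.continuous d).continuousOn
    have hk1 := hsign (k+1)
    have hk0 := hsign k
    rcases Nat.even_or_odd k with he | ho
    · have e0 : ((-1:ℝ))^k = 1 := he.neg_one_pow
      have e1 : ((-1:ℝ))^(k+1) = -1 := by rw [pow_succ, e0]; ring
      rw [e0, one_mul] at hk0
      rw [e1] at hk1
      have hmem : (0:ℝ) ∈ Set.Ioo (d.eval (x (k+1))) (d.eval (x k)) := ⟨by linarith, hk0⟩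
      obtain ⟨y, hy, hyv⟩ := intermediate_value_Ioo hxy.le hcont hmem
      exact ⟨y, hy, hyv⟩
    · have e0 : ((-1:ℝ))^k = -1 := ho.neg_one_pow
      have e1 : ((-1:ℝ))^(k+1) = 1 := by rw [pow_succ, e0]; ring
      rw [e0] at hk0
      rw [e1, one_mul] at hk1
      have hmem : (0:ℝ) ∈ Set.Ioo (d.eval (x k)) (d.eval (x (k+1))) := ⟨by linarith, hk1⟩
      obtain ⟨y, hy, hyv⟩ := intermediate_value_Ioo' hxy.le hcont hmem
      exact ⟨y, hy, hyv⟩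
  choose y hy hy0 using fun k : Fin n => hroot k k.isLt
  have hyanti : ∀ i j : Fin n, (i:ℕ) < (j:ℕ) → y j < y i := by
    intro i j hij
    have h1 : y j < x (j:ℕ) := (hy j).2
    have h2 : x ((i:ℕ)+1) < y i := (hy i).1
    have h3 : x (j:ℕ) ≤ x ((i:ℕ)+1) := by
      rcases eq_or_lt_of_le (show (i:ℕ)+1 ≤ (j:ℕ) by omega) with hE | hL
      · rw [hE]
      · exact (hxanti _ _ hL (le_of_lt j.isLt)).le
    linarith
  have hyinj : Function.Injective y := by
    intro i j hij
    rcases lt_trichotomy (i:ℕ) (j:ℕ) with hlt | heq | hgt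
    · exact absurd hij (ne_of_gt (hyanti i j hlt))
    · exact Fin.ext heq
    · exact absurd hij (ne_of_lt (hyanti j i hgt))
  have hd0 : d = 0 := by
    apply Polynomial.eq_zero_of_natDegree_lt_card_of_eval_eq_zero d hyinj hy0
    rw [Fintype.card_fin]
    by_cases hdz : d = 0
    · rw [hdz]; simpa using (show 0 < n by omega)
    · exact (natDegree_lt_iff_degree_lt hdz).mpr hdlt
  have hPq : P = q := by rwa [hd_def, sub_eq_zero] at hd0
  have h2 : q.eval (x 0) = 2 := by
    rw [← hPq, hPx 0]; norm_num
  have h3 := h (x 0) (hxmem 0)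
  rw [h2] at h3
  norm_num at h3

/-- A nonzero integer polynomial has sup ≥ 1 on an interval of length ≥ 4. -/
lemma int_poly_small (q : Polynomial ℤ) (a b : ℝ) (hab : b - a ≥ 4)
    (h : ∀ x ∈ Set.Icc a b, |Polynomial.aeval x q| < 1) : q = 0 := by
  by_contra hq
  set Q : ℝ[X] := q.map (Int.castRingHom ℝ) with hQ_def
  have hQev : ∀ x : ℝ, Q.eval x = Polynomial.aeval x q := by
    intro x
    rw [hQ_def, eval_map, aeval_def]
    rfl
  have hcast : Function.Injective (Int.castRingHom ℝ) := fun u v huv => by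
    simpa using huv
  have hQ0 : Q ≠ 0 := by
    rw [hQ_def, Ne, Polynomial.map_eq_zero_iff hcast]
    exact hq
  have hlc : Q.leadingCoeff = ((q.leadingCoeff : ℤ) : ℝ) := leadingCoeff_map_of_injective hcast q
  have hlcabs : 1 ≤ |Q.leadingCoeff| := by
    rw [hlc, ← Int.cast_abs]
    exact_mod_cast Int.one_le_abs (leadingCoeff_ne_zero.mpr hq)
  have hlc0 : Q.leadingCoeff ≠ 0 := leadingCoeff_ne_zero.mpr hQ0
  have hamem : a ∈ Set.Icc a b := ⟨le_refl a, by linarith⟩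
  rcases Nat.eq_zero_or_pos Q.natDegree with hdeg | hdeg
  · -- constant case
    have hC : Q = Polynomial.C (Q.coeff 0) := eq_C_of_natDegree_eq_zero hdeg
    have hco : Q.coeff 0 = Q.leadingCoeff := by
      rw [leadingCoeff, hdeg]
    have := h a hamem
    rw [← hQev a, hC] at this
    simp only [eval_C, hco] at this
    linarith
  · set r : ℝ[X] := Q * Polynomial.C Q.leadingCoeff⁻¹ with hr_def
    have hrm : r.Monic := monic_mul_leadingCoeff_inv hQ0
    have hrdeg : 1 ≤ r.natDegree := by
      have : r.degree = Q.degree := degree_mul_leadingCoeff_inv Q hQ0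
      have h2 : r.natDegree = Q.natDegree := natDegree_eq_of_degree_eq this
      omega
    refine monic_sup_ge r hrm hrdeg a ?_
    intro z hz
    have hzmem : z ∈ Set.Icc a b := ⟨hz.1, by linarith [hz.2]⟩
    have hQz : |Q.eval z| < 1 := by rw [hQev]; exact h z hzmem
    have hinv : |Q.leadingCoeff⁻¹| ≤ 1 := by
      rw [abs_inv]
      rw [inv_le_one_iff₀]
      right
      exact hlcabs
    calc |r.eval z| = |Q.eval z| * |Q.leadingCoeff⁻¹| := by
          rw [hr_def, eval_mul, eval_C, abs_mul]
      _ ≤ |Q.eval z| * 1 := by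
          exact mul_le_mul_of_nonneg_left hinv (abs_nonneg _)
      _ < 2 := by rw [mul_one]; linarith

/-- If `f` is continuous on `[a, b]` with `b - a ≥ 4` and is uniformly approximable on
`[a, b]` by polynomials with integer coefficients, then `f` coincides on `[a, b]` with a
polynomial with integer coefficients. -/
theorem integer_poly_approx_on_long_interval (a b : ℝ) (hab : b - a ≥ 4) (f : ℝ → ℝ)
    (hf : ContinuousOn f (Set.Icc a b))
    (happrox : ∀ ε : ℝ, ε > 0 → ∃ p : Polynomial ℤ,
      ∀ x ∈ Set.Icc a b, |f x - Polynomial.aeval x p| ≤ ε) :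
    ∃ p : Polynomial ℤ, ∀ x ∈ Set.Icc a b, f x = Polynomial.aeval x p := by
  obtain ⟨p, hp⟩ := happrox (1/3) (by norm_num)
  refine ⟨p, fun x hx => ?_⟩
  have key : ∀ ε : ℝ, ε > 0 → |f x - Polynomial.aeval x p| ≤ ε := by
    intro ε hε
    obtain ⟨p', hp'⟩ := happrox (min ε (1/3)) (lt_min hε (by norm_num))
    have hq : p - p' = 0 := by
      apply int_poly_small (p - p') a b hab
      intro z hz
      have h1 := hp z hz
      have h2 := hp' z hz
      have h3 : |f z - Polynomial.aeval z p'| ≤ 1/3 :=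
        le_trans h2 (min_le_right _ _)
      have e1 := abs_le.mp h1
      have e2 := abs_le.mp h3
      have heq : (Polynomial.aeval z (p - p') : ℝ)
          = (f z - Polynomial.aeval z p') - (f z - Polynomial.aeval z p) := by
        rw [map_sub]; ring
      rw [heq]
      rw [abs_lt]
      constructor <;> [linarith [e1.1, e2.2]; linarith [e1.2, e2.1]]
    have hpp' : p = p' := sub_eq_zero.mp hq
    rw [hpp']
    exact le_trans (hp' x hx) (min_le_left _ _)
  have h0 : |f x - Polynomial.aeval x p| ≤ 0 := by
    by_contra hpos
    push_neg at hpos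
    have := key (|f x - Polynomial.aeval x p| / 2) (by linarith)
    linarith
  have := abs_nonneg (f x - Polynomial.aeval x p)
  have : f x - Polynomial.aeval x p = 0 := abs_eq_zero.mp (le_antisymm h0 this)
  linarith
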